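/- Let N ≥ 1 and n ≥ 0 be natural numbers and let A ⊆ ℕ be a finite set such that for every j with 0 ≤ j ≤ N − 1, the set A ∩ (j + Nℤ) has at least n + 1 elements. Let F, G ∈ ℚ⟦X⟧ be such that (1 − X^N)^{n+1} · F and (1 − X^N)^{n+1} · G are both polynomials of degree < N(n+1). If coeff_k F = coeff_k G for all k ∈ A, then F = G. (The power-series form of Corollary 1.2 of the paper: equality of the multiplicities over A implies equality of all multiplicities.) -/

import Mathlib

open Finset Polynomial



noncomputable def Sser (N n : ℕ) : PowerSeries ℚ :=
  PowerSeries.mk fun t => if N ∣ t then ((t / N + n).choose n : ℚ) else 0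

lemma coeff_one_sub_XN_mul (N k : ℕ) (f : PowerSeries ℚ) :
    PowerSeries.coeff k ((1 - PowerSeries.X ^ N) * f) =
      PowerSeries.coeff k f - if N ≤ k then PowerSeries.coeff (k - N) f else 0 := by
  rw [sub_mul, one_mul, map_sub, PowerSeries.coeff_X_pow_mul']

lemma Sser_base (N : ℕ) (hN : 1 ≤ N) :
    (1 - PowerSeries.X ^ N) * Sser N 0 = 1 := by
  ext k
  rw [coeff_one_sub_XN_mul]
  simp only [Sser, PowerSeries.coeff_mk, Nat.choose_zero_right, Nat.cast_one,
    PowerSeries.coeff_one]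
  by_cases hd : N ∣ k
  · by_cases hk : N ≤ k
    · have hd' : N ∣ k - N := (Nat.dvd_sub hd dvd_rfl)
      have hk0 : k ≠ 0 ∨ k = 0 := by omega
      rcases Nat.eq_zero_or_pos k with h0 | h0
      · omega
      · rw [if_pos hd, if_pos hk, if_pos hd', if_neg (by omega)]; ring
    · have : k = 0 := by
        rcases hd with ⟨c, rfl⟩
        rcases Nat.eq_zero_or_pos c with h0 | h0
        · simp [h0]
        · exfalso; exact hk (Nat.le_mul_of_pos_right N h0)
      rw [if_pos hd, if_neg hk, if_pos this]; ring
  · have h0 : k ≠ 0 := by rintro rfl; exact hd (Nat.dvd_zero N)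
    rw [if_neg hd, if_neg h0]
    by_cases hk : N ≤ k
    · have : ¬ N ∣ k - N := by
        intro hc
        exact hd (by have := Nat.dvd_add hc (dvd_refl N); rwa [Nat.sub_add_cancel hk] at this)
      rw [if_pos hk, if_neg this]; ring
    · rw [if_neg hk]; ring

lemma Sser_step (N n : ℕ) (hN : 1 ≤ N) :
    (1 - PowerSeries.X ^ N) * Sser N (n + 1) = Sser N n := by
  ext k
  rw [coeff_one_sub_XN_mul]
  simp only [Sser, PowerSeries.coeff_mk]
  by_cases hd : N ∣ k
  · rcases hd with ⟨c, rfl⟩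
    have hNc : N * c / N = c := Nat.mul_div_cancel_left c (by omega)
    by_cases hk : N ≤ N * c
    · have hc1 : 1 ≤ c := by
        by_contra hc; push_neg at hc
        interval_cases c <;> omega
      have hd' : N ∣ N * c - N := Nat.dvd_sub ⟨c, rfl⟩ dvd_rfl
      have hsub : (N * c - N) / N = c - 1 := by
        have h1 : N * c = N * (c - 1) + N := by
          have : c = (c - 1) + 1 := by omega
          rw [this, Nat.mul_add, mul_one, Nat.add_sub_cancel]
        rw [show N * c - N = N * (c - 1) by omega, Nat.mul_div_cancel_left _ (by omega : 0 < N)]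
      rw [if_pos ⟨c, rfl⟩, if_pos hk, if_pos hd', hsub, hNc]
      have he : c - 1 + (n + 1) = c + n := by omega
      rw [he]
      have hp : (c + n + 1).choose (n+1) = (c+n).choose n + (c+n).choose (n+1) :=
        Nat.choose_succ_succ' _ _
      have : c + (n+1) = c + n + 1 := by omega
      rw [this, hp]
      push_cast
      rw [if_pos (dvd_mul_right N c)]
      ring
    · have hc0 : c = 0 := by
        by_contra hc
        exact hk (Nat.le_mul_of_pos_right N (by omega))
      subst hc0
      rw [if_pos ⟨0, by ring⟩, if_neg hk]
      simp
  · have h0 : ¬ N ∣ k := hd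
    rw [if_neg hd]
    by_cases hk : N ≤ k
    · have : ¬ N ∣ k - N := by
        intro hc
        exact hd (by have := Nat.dvd_add hc (dvd_refl N); rwa [Nat.sub_add_cancel hk] at this)
      rw [if_pos hk, if_neg this, if_neg hd]; ring
    · rw [if_neg hk, if_neg hd]; ring

lemma Sser_inv (N n : ℕ) (hN : 1 ≤ N) :
    (1 - PowerSeries.X ^ N) ^ (n + 1) * Sser N n = 1 := by
  induction n with
  | zero => rw [pow_one]; exact Sser_base N hN
  | succ n ih =>
    calc (1 - PowerSeries.X ^ N) ^ (n + 2) * Sser N (n + 1)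
        = (1 - PowerSeries.X ^ N) ^ (n + 1) *
            ((1 - PowerSeries.X ^ N) * Sser N (n + 1)) := by ring
      _ = 1 := by rw [Sser_step N n hN]; exact ih


lemma prod_fac (d n : ℕ) : (∏ t ∈ range n, (d + t + 1)) * d.factorial = (d + n).factorial := by
  induction n with
  | zero => simp
  | succ n ih =>
    rw [prod_range_succ]
    calc (∏ t ∈ range n, (d + t + 1)) * (d + n + 1) * d.factorial
        = (∏ t ∈ range n, (d + t + 1)) * d.factorial * (d + n + 1) := by ring
      _ = (d + n).factorial * (d + n + 1) := by rw [ih]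
      _ = (d + n + 1).factorial := by rw [Nat.factorial_succ]; ring

lemma prod_choose_nat (d n : ℕ) :
    ∏ t ∈ range n, (d + t + 1) = n.factorial * (d + n).choose n := by
  have h1 := prod_fac d n
  have h2 : (d + n).choose n * n.factorial * d.factorial = (d + n).factorial := by
    have := Nat.choose_mul_factorial_mul_factorial (Nat.le_add_left n d)
    simpa [Nat.add_sub_cancel] using this
  have := h1.trans h2.symm
  have hpos : 0 < d.factorial := Nat.factorial_pos d
  exact (Nat.eq_of_mul_eq_mul_right hpos (by linarith)).trans (Nat.mul_comm _ _)

lemma Bval (n i m : ℕ) (hi : i ≤ n) :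
    ∏ t ∈ range n, ((m : ℚ) + ((t : ℚ) + 1 - (i : ℚ))) =
      (n.factorial : ℚ) * (((m + n - i).choose n : ℕ) : ℚ) := by
  rcases le_or_gt i m with him | him
  · have hd : ((m - i : ℕ) : ℚ) = (m : ℚ) - i := by push_cast [him]; ring
    have : ∀ t ∈ range n, (m : ℚ) + ((t : ℚ) + 1 - i) = ((m - i : ℕ) : ℚ) + t + 1 := by
      intro t _; rw [hd]; ring
    rw [prod_congr rfl this]
    have := congrArg (fun x : ℕ => (x : ℚ)) (prod_choose_nat (m - i) n)
    push_cast at this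
    rw [this]
    have he : m - i + n = m + n - i := by omega
    rw [he]
  · rw [prod_eq_zero (show i - m - 1 ∈ range n by simp; omega)]
    · have : (m + n - i).choose n = 0 := Nat.choose_eq_zero_of_lt (by omega)
      rw [this]; simp
    · have : ((i - m - 1 : ℕ) : ℚ) = (i : ℚ) - m - 1 := by
        rw [Nat.cast_sub (by omega), Nat.cast_sub (by omega), Nat.cast_one]
      rw [this]; ring

lemma coeff_mul_Sser (N n j m : ℕ) (hN : 1 ≤ N) (hj : j < N) (r : PowerSeries ℚ)
    (hr : ∀ s, N * (n + 1) ≤ s → PowerSeries.coeff s r = 0) :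
    PowerSeries.coeff (j + N * m) (r * Sser N n) =
      ∑ i ∈ range (n + 1),
        PowerSeries.coeff (j + N * i) r * (((m + n - i).choose n : ℕ) : ℚ) := by
  rw [PowerSeries.coeff_mul, Finset.Nat.sum_antidiagonal_eq_sum_range_succ_mk]
  set K := j + N * m with hK
  set f : ℕ → ℚ := fun s =>
    PowerSeries.coeff s r * PowerSeries.coeff (K - s) (Sser N n) with hf
  set E := (range (min (m + 1) (n + 1))).image (fun i => j + N * i) with hE
  have hsub : E ⊆ range (K + 1) := by
    intro s hs
    simp only [hE, mem_image, mem_range] at hs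
    obtain ⟨i, hi, rfl⟩ := hs
    have him : i ≤ m := by omega
    have : N * i ≤ N * m := Nat.mul_le_mul_left N him
    simp only [mem_range]; omega
  have hzero : ∀ s ∈ range (K + 1), s ∉ E → f s = 0 := by
    intro s hs hsE
    simp only [mem_range] at hs
    by_cases hd : N ∣ K - s
    · by_cases hsr : s < N * (n + 1)
      · exfalso
        obtain ⟨l, hl⟩ := hd
        have hlm : l < m + 1 := by
          have h1 : N * (m + 1) = N * m + N := by ring
          have h2 : N * l < N * (m + 1) := by omega
          exact Nat.lt_of_mul_lt_mul_left h2
        have h3 : N * m = N * (m - l) + N * l := by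
          rw [← Nat.mul_add]; congr 1; omega
        have hsi : s = j + N * (m - l) := by omega
        have hin : m - l < n + 1 := by
          have h4 : N * (n + 1) = N * n + N := by ring
          have h5 : N * (m - l) < N * (n + 1) := by omega
          exact Nat.lt_of_mul_lt_mul_left h5
        exact hsE (by
          simp only [hE, mem_image, mem_range]
          exact ⟨m - l, by omega, hsi.symm⟩)
      · simp only [hf]; rw [hr s (by omega)]; ring
    · simp only [hf, Sser, PowerSeries.coeff_mk, if_neg hd]; ring
  rw [← Finset.sum_subset hsub hzero]
  rw [Finset.sum_image (by
    intro a _ b _ hab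
    have : N * a = N * b := by have hab' : j + N * a = j + N * b := hab; omega
    exact Nat.eq_of_mul_eq_mul_left (by omega) this)]
  have hterm : ∀ i ∈ range (min (m + 1) (n + 1)),
      f (j + N * i) =
        PowerSeries.coeff (j + N * i) r * (((m + n - i).choose n : ℕ) : ℚ) := by
    intro i hi
    simp only [mem_range] at hi
    have him : i ≤ m := by omega
    have h3 : N * m = N * (m - i) + N * i := by
      rw [← Nat.mul_add]; congr 1; omega
    have hKs : K - (j + N * i) = N * (m - i) := by omega
    simp only [hf, Sser, PowerSeries.coeff_mk, hKs, if_pos (Dvd.intro _ rfl)]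
    rw [Nat.mul_div_cancel_left _ (by omega : 0 < N)]
    have he : m - i + n = m + n - i := by omega
    rw [he]
  rw [Finset.sum_congr rfl hterm]
  apply Finset.sum_subset
  · intro i hi; simp only [mem_range] at *; omega
  · intro i hi hni
    simp only [mem_range] at hi hni
    have : (m + n - i).choose n = 0 := Nat.choose_eq_zero_of_lt (by omega)
    rw [this]; simp

theorem coeffs_on_A_determine_series (N n : ℕ) (hN : 1 ≤ N) (A : Finset ℕ)
    (hA : ∀ j < N, n + 1 ≤ (A.filter fun k => k % N = j).card)
    (F G : PowerSeries ℚ)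
    (hF : ∃ p : Polynomial ℚ, p.degree < (N * (n + 1) : ℕ) ∧
      (1 - PowerSeries.X ^ N) ^ (n + 1) * F = (p : PowerSeries ℚ))
    (hG : ∃ q : Polynomial ℚ, q.degree < (N * (n + 1) : ℕ) ∧
      (1 - PowerSeries.X ^ N) ^ (n + 1) * G = (q : PowerSeries ℚ))
    (h : ∀ k ∈ A, PowerSeries.coeff k F = PowerSeries.coeff k G) :
    F = G := by
  obtain ⟨p, hpd, hpF⟩ := hF
  obtain ⟨q, hqd, hqG⟩ := hG
  set r : PowerSeries ℚ := ((p - q : Polynomial ℚ) : PowerSeries ℚ) with hrdef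
  have hrH : (1 - PowerSeries.X ^ N) ^ (n + 1) * (F - G) = r := by
    rw [mul_sub, hpF, hqG, hrdef, Polynomial.coe_sub]
  have hr0 : ∀ s, N * (n + 1) ≤ s → PowerSeries.coeff s r = 0 := by
    intro s hs
    rw [hrdef, Polynomial.coeff_coe]
    apply Polynomial.coeff_eq_zero_of_degree_lt
    calc (p - q).degree < ((N * (n + 1) : ℕ) : WithBot ℕ) :=
          lt_of_le_of_lt (Polynomial.degree_sub_le p q) (max_lt hpd hqd)
      _ ≤ (s : WithBot ℕ) := by exact_mod_cast Nat.cast_le.mpr hs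
  have hH : F - G = r * Sser N n := by
    calc F - G = ((1 - PowerSeries.X ^ N) ^ (n + 1) * Sser N n) * (F - G) := by
          rw [Sser_inv N n hN, one_mul]
      _ = Sser N n * ((1 - PowerSeries.X ^ N) ^ (n + 1) * (F - G)) := by ring
      _ = r * Sser N n := by rw [hrH]; ring
  have hcoeff0 : ∀ k ∈ A, PowerSeries.coeff k (F - G) = 0 := by
    intro k hk; rw [map_sub, h k hk]; ring
  have hall : ∀ k, PowerSeries.coeff k (F - G) = 0 := by
    intro k
    set j := k % N with hjdef
    have hj : j < N := Nat.mod_lt k (by omega)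
    set P : Polynomial ℚ := ∑ i ∈ range (n + 1),
        Polynomial.C (PowerSeries.coeff (j + N * i) r / (n.factorial : ℚ)) *
          ∏ t ∈ range n, (Polynomial.X + Polynomial.C ((t : ℚ) + 1 - (i : ℚ))) with hPdef
    have hPeval : ∀ m : ℕ, P.eval (m : ℚ) = PowerSeries.coeff (j + N * m) (F - G) := by
      intro m
      rw [hH, coeff_mul_Sser N n j m hN hj r hr0, hPdef, Polynomial.eval_finset_sum]
      apply Finset.sum_congr rfl
      intro i hi
      simp only [mem_range] at hi
      rw [Polynomial.eval_mul, Polynomial.eval_C, Polynomial.eval_prod]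
      have hprod : ∏ t ∈ range n, Polynomial.eval (m : ℚ)
          (Polynomial.X + Polynomial.C ((t : ℚ) + 1 - (i : ℚ))) =
          ∏ t ∈ range n, ((m : ℚ) + ((t : ℚ) + 1 - (i : ℚ))) :=
        prod_congr rfl fun t _ => by simp
      rw [hprod, Bval n i m (by omega)]
      have hfac : (n.factorial : ℚ) ≠ 0 := Nat.cast_ne_zero.mpr n.factorial_ne_zero
      field_simp
    have hPdeg : P.natDegree ≤ n := by
      rw [hPdef]
      apply Polynomial.natDegree_sum_le_of_forall_le
      intro i _
      refine le_trans (Polynomial.natDegree_C_mul_le _ _) ?_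
      refine le_trans (Polynomial.natDegree_prod_le _ _) ?_
      refine le_trans (Finset.sum_le_sum fun t _ =>
        le_of_eq (Polynomial.natDegree_X_add_C _)) ?_
      simp
    set T := A.filter (fun k' => k' % N = j) with hT
    have hcard : n + 1 ≤ T.card := hA j hj
    have hback : ∀ a ∈ T, a = j + N * (a / N) := by
      intro a ha
      simp only [hT, mem_filter] at ha
      rw [← ha.2, Nat.mod_add_div]
    have hinj : Set.InjOn (fun k' => ((k' / N : ℕ) : ℚ)) T := by
      intro a ha b hb hab
      simp only [Nat.cast_inj] at hab
      rw [hback a (by simpa using ha), hback b (by simpa using hb), hab]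
    set s : Finset ℚ := T.image (fun k' => ((k' / N : ℕ) : ℚ)) with hs
    have hscard : n + 1 ≤ s.card := by
      rw [hs, Finset.card_image_of_injOn hinj]; exact hcard
    have hP0 : P = 0 := by
      apply Polynomial.eq_zero_of_natDegree_lt_card_of_eval_eq_zero' P s
      · intro x hx
        obtain ⟨k', hk', rfl⟩ := Finset.mem_image.mp hx
        rw [hPeval (k' / N), ← hback k' hk']
        exact hcoeff0 k' (Finset.mem_filter.mp hk').1
      · omega
    have := hPeval (k / N)
    rw [hP0, Polynomial.eval_zero, hjdef, Nat.mod_add_div] at this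
    exact this.symm
  have hFG : F - G = 0 := PowerSeries.ext fun k => by rw [hall k, map_zero]
  exact sub_eq_zero.mp hFG
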